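/- Let G = (V, E) be a finite simple undirected graph with |V| ≥ 2. Let G' be the complete bipartite graph with parts V and W = {x_r, x_g, x_b, x_d} (every vertex of V adjacent to every vertex of W), all edges of length 1. Then G admits a proper 3-edge-coloring if and only if there exist walks in G', one walk from u to v for every edge uv ∈ E and one walk from x_d to u for every u ∈ V, such that the collection of all these walks respects unit capacities and each walk is a concatenation of at most 2 unique-shortest-path segments. -/

import Mathlib

/-- The number of occurrences of `a` in the list `l` (counted with multiplicity). -/
noncomputable def cnt {α : Type*} (a : α) (l : List α) : ℕ :=
  letI := Classical.decEq α
  l.count a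

/-- `ConcatUSP G j w`: the walk `w` is a concatenation of (exactly) `j` consecutive
subwalks, each of which is the unique shortest path in `G` between its endpoints. -/
inductive ConcatUSP {V : Type*} (G : SimpleGraph V) : ℕ → ∀ {x y : V}, G.Walk x y → Prop
  | nil {x : V} : ConcatUSP G 0 (SimpleGraph.Walk.nil : G.Walk x x)
  | cons {j : ℕ} {x y z : V} (p : G.Walk x y) (q : G.Walk y z)
      (hp : p.length = G.dist x y)
      (hu : ∀ p' : G.Walk x y, p'.length = G.dist x y → p' = p)
      (hq : ConcatUSP G j q) : ConcatUSP G (j + 1) (p.append q)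

/-- The complete bipartite graph with parts `V` and `W = {x_r, x_g, x_b, x_d}`
(encoded as `Fin 4`, with `x_d = 3`): every vertex of `V` is adjacent
to every vertex of `W` and there are no further edges. -/
def bipG (V : Type*) : SimpleGraph (V ⊕ Fin 4) where
  Adj x y :=
    match x, y with
    | Sum.inl _, Sum.inr _ => True
    | Sum.inr _, Sum.inl _ => True
    | _, _ => False
  symm := by
    constructor
    rintro (u | u) (v | v) h
    · exact h
    · trivial
    · trivial
    · exact h
  loopless := by
    constructor
    rintro (u | u) h
    · exact h
    · exact h

open SimpleGraph Sum

section Helpers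

lemma cnt_nil {α : Type*} (a : α) : cnt a ([] : List α) = 0 := by simp [cnt]

lemma cnt_cons_self {α : Type*} (a : α) (l : List α) :
    cnt a (a :: l) = cnt a l + 1 := by
  letI := Classical.decEq α
  unfold cnt; exact List.count_cons_self

lemma cnt_cons_ne {α : Type*} {a b : α} (h : a ≠ b) (l : List α) :
    cnt a (b :: l) = cnt a l := by
  letI := Classical.decEq α
  unfold cnt; exact List.count_cons_of_ne h.symm

lemma one_le_cnt {α : Type*} {a : α} {l : List α} (h : a ∈ l) : 1 ≤ cnt a l := by
  letI := Classical.decEq α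
  unfold cnt
  exact List.count_pos_iff.mpr h

variable {V : Type*}

lemma bip_adj_lr (u : V) (i : Fin 4) : (bipG V).Adj (inl u) (inr i) := trivial

lemma bip_adj_rl (i : Fin 4) (u : V) : (bipG V).Adj (inr i) (inl u) := trivial

lemma bip_not_adj_ll (u v : V) : ¬ (bipG V).Adj (inl u) (inl v) := fun h => h

lemma bip_not_adj_rr (i j : Fin 4) : ¬ (bipG V).Adj (inr i) (inr j) := fun h => h

/-- a walk of length 1 is a single edge -/
lemma walk_len1 {W : Type*} {G : SimpleGraph W} {x y : W} (p : G.Walk x y)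
    (h : p.length = 1) : ∃ h' : G.Adj x y, p = SimpleGraph.Walk.cons h' SimpleGraph.Walk.nil := by
  cases p with
  | nil => simp at h
  | cons h' q =>
    have hq0 : q.length = 0 := by simp only [SimpleGraph.Walk.length_cons] at h; omega
    have := SimpleGraph.Walk.eq_of_length_eq_zero hq0
    subst this
    exact ⟨h', by cases q with | nil => rfl | cons _ _ => simp at hq0⟩

/-- a walk of length 2 decomposes -/
lemma walk_len2 {W : Type*} {G : SimpleGraph W} {x y : W} (p : G.Walk x y)
    (h : p.length = 2) : ∃ (m : W) (h1 : G.Adj x m) (h2 : G.Adj m y),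
      p = SimpleGraph.Walk.cons h1 (SimpleGraph.Walk.cons h2 SimpleGraph.Walk.nil) := by
  cases p with
  | nil => simp at h
  | cons h' q =>
    have hq1 : q.length = 1 := by simp only [SimpleGraph.Walk.length_cons] at h; omega
    obtain ⟨h2, hq⟩ := walk_len1 q hq1
    exact ⟨_, h', h2, by rw [hq]⟩

/-- single edge walk is the unique shortest path -/
lemma usp_edge {W : Type*} {G : SimpleGraph W} {x y : W} (h : G.Adj x y) :
    ConcatUSP G 1 (SimpleGraph.Walk.cons h SimpleGraph.Walk.nil) := by
  have hd : G.dist x y = 1 := SimpleGraph.dist_eq_one_iff_adj.mpr h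
  exact ConcatUSP.cons (SimpleGraph.Walk.cons h .nil) .nil
    (by simp [hd])
    (by
      intro p' hp'
      rw [hd] at hp'
      obtain ⟨h'', hp''⟩ := walk_len1 p' hp'
      exact hp'')
    ConcatUSP.nil

lemma usp_two {W : Type*} {G : SimpleGraph W} {x y z : W} (h1 : G.Adj x y) (h2 : G.Adj y z) :
    ConcatUSP G 2 (SimpleGraph.Walk.cons h1 (SimpleGraph.Walk.cons h2 SimpleGraph.Walk.nil)) := by
  have hd : G.dist x y = 1 := SimpleGraph.dist_eq_one_iff_adj.mpr h1
  exact ConcatUSP.cons (SimpleGraph.Walk.cons h1 .nil) (SimpleGraph.Walk.cons h2 .nil)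
    (by simp [hd])
    (by
      intro p' hp'
      rw [hd] at hp'
      obtain ⟨h'', hp''⟩ := walk_len1 p' hp'
      exact hp'')
    (usp_edge h2)

/-- the side of a vertex, for parity arguments -/
def side : V ⊕ Fin 4 → ZMod 2 := Sum.elim (fun _ => 0) (fun _ => 1)

lemma adj_side {x y : V ⊕ Fin 4} (h : (bipG V).Adj x y) : side y = side x + 1 := by
  rcases x with u | i <;> rcases y with v | j
  · exact absurd h (bip_not_adj_ll u v)
  · simp [side]
  · simp [side]; decide
  · exact absurd h (bip_not_adj_rr i j)

lemma walk_parity {x y : V ⊕ Fin 4} (w : (bipG V).Walk x y) :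
    side x + (w.length : ZMod 2) = side y := by
  induction w with
  | nil => simp
  | cons h q ih =>
    rw [SimpleGraph.Walk.length_cons]
    push_cast
    rw [← ih, adj_side h]
    ring

/-- In `bipG V` with `2 ≤ card V`, unique shortest path segments have length at most 1. -/
lemma usp_short [Fintype V] (hV : 2 ≤ Fintype.card V) {x y : V ⊕ Fin 4}
    (p : (bipG V).Walk x y) (hp : p.length = (bipG V).dist x y)
    (hu : ∀ p' : (bipG V).Walk x y, p'.length = (bipG V).dist x y → p' = p) :
    p.length ≤ 1 := by
  by_contra hlen
  push_neg at hlen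
  have hdge : 2 ≤ (bipG V).dist x y := by omega
  have hne : x ≠ y := by
    rintro rfl
    have := SimpleGraph.dist_self (G := bipG V) (v := x)
    omega
  have hnadj : ¬ (bipG V).Adj x y := by
    intro h
    have := SimpleGraph.dist_eq_one_iff_adj.mpr h
    omega
  -- x and y are on the same side; build two distinct shortest walks
  have key : ∃ m₁ m₂ : V ⊕ Fin 4, m₁ ≠ m₂ ∧ (bipG V).Adj x m₁ ∧ (bipG V).Adj m₁ y ∧
      (bipG V).Adj x m₂ ∧ (bipG V).Adj m₂ y := by
    rcases x with u | i <;> rcases y with v | j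
    · exact ⟨inr 0, inr 1, by simp, trivial, trivial, trivial, trivial⟩
    · exact absurd trivial hnadj
    · exact absurd trivial hnadj
    · obtain ⟨a, b, hab⟩ := Fintype.exists_pair_of_one_lt_card hV
      exact ⟨inl a, inl b, by simp [hab], trivial, trivial, trivial, trivial⟩
  obtain ⟨m₁, m₂, hm, ha1, hb1, ha2, hb2⟩ := key
  set w₁ : (bipG V).Walk x y := .cons ha1 (.cons hb1 .nil) with hw₁
  set w₂ : (bipG V).Walk x y := .cons ha2 (.cons hb2 .nil) with hw₂
  have hdle : (bipG V).dist x y ≤ 2 := by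
    have := SimpleGraph.dist_le w₁
    simpa [hw₁] using this
  have hd2 : (bipG V).dist x y = 2 := le_antisymm hdle hdge
  have e1 := hu w₁ (by simp [hw₁, hd2])
  have e2 := hu w₂ (by simp [hw₂, hd2])
  have : w₁ = w₂ := e1.trans e2.symm
  have hs := congrArg SimpleGraph.Walk.support this
  simp [hw₁, hw₂] at hs
  exact hm hs

lemma concat_len [Fintype V] (hV : 2 ≤ Fintype.card V) {j : ℕ} {x y : V ⊕ Fin 4}
    {w : (bipG V).Walk x y} (h : ConcatUSP (bipG V) j w) : w.length ≤ j := by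
  induction h with
  | nil => simp
  | cons p q hp hu hq ih =>
    rw [SimpleGraph.Walk.length_append]
    have := usp_short hV p hp hu
    omega

lemma sum_le_one {ι : Type*} [Fintype ι] (f : ι → ℕ) (h1 : ∀ i, f i ≤ 1)
    (h2 : ∀ i j, 0 < f i → 0 < f j → i = j) : ∑ i, f i ≤ 1 := by
  by_cases hex : ∃ i, 0 < f i
  · obtain ⟨i, hi⟩ := hex
    have : ∑ j, f j = f i := by
      apply Finset.sum_eq_single i
      · intro j _ hj
        by_contra hj0
        exact hj (h2 j i (Nat.pos_of_ne_zero hj0) hi)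
      · intro h; exact absurd (Finset.mem_univ i) h
    rw [this]; exact h1 i
  · push_neg at hex
    have : ∑ j, f j = 0 := Finset.sum_eq_zero fun j _ => Nat.eq_zero_of_le_zero (hex j)
    omega

lemma cnt_singleton_le_one {α : Type*} (a b : α) : cnt a [b] ≤ 1 := by
  classical
  by_cases h : a = b
  · subst h; rw [cnt_cons_self, cnt_nil]
  · rw [cnt_cons_ne h, cnt_nil]; omega

lemma cnt_pair_le_one {α : Type*} {x₁ x₂ : α} (h : x₁ ≠ x₂) (a : α) :
    cnt a [x₁, x₂] ≤ 1 := by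
  classical
  by_cases h1 : a = x₁
  · subst h1
    rw [cnt_cons_self, cnt_cons_ne h, cnt_nil]
  · rw [cnt_cons_ne h1]
    exact cnt_singleton_le_one a x₂

lemma cnt_pos_mem {α : Type*} {a : α} {l : List α} (h : 0 < cnt a l) : a ∈ l := by
  letI := Classical.decEq α
  unfold cnt at h
  exact List.count_pos_iff.mp h

lemma sum_add_sum_le_one {ι κ : Type*} [Fintype ι] [Fintype κ] (f : ι → ℕ) (g : κ → ℕ)
    (hf1 : ∀ i, f i ≤ 1) (hg1 : ∀ k, g k ≤ 1)
    (hff : ∀ i j, 0 < f i → 0 < f j → i = j)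
    (hgg : ∀ i j, 0 < g i → 0 < g j → i = j)
    (hfg : ∀ i k, 0 < f i → 0 < g k → False) :
    (∑ i, f i) + (∑ k, g k) ≤ 1 := by
  by_cases hex : ∃ i, 0 < f i
  · obtain ⟨i, hi⟩ := hex
    have hg0 : ∑ k, g k = 0 := Finset.sum_eq_zero fun k _ => by
      by_contra hk
      exact hfg i k hi (Nat.pos_of_ne_zero hk)
    have := sum_le_one f hf1 hff
    omega
  · push_neg at hex
    have hf0 : ∑ i, f i = 0 := Finset.sum_eq_zero fun i _ => Nat.eq_zero_of_le_zero (hex i)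
    have := sum_le_one g hg1 hgg
    omega

lemma walk_parity2 {x y : V ⊕ Fin 4} (w : (bipG V).Walk x y) :
    (w.length + (if x.isLeft = y.isLeft then 0 else 1)) % 2 = 0 := by
  induction w with
  | nil => simp
  | @cons x m y h q ih =>
    have hm : m.isLeft = !x.isLeft := by
      rcases x with u | i <;> rcases m with v | j
      · exact absurd h (bip_not_adj_ll u v)
      · simp
      · simp
      · exact absurd h (bip_not_adj_rr i j)
    rw [SimpleGraph.Walk.length_cons]
    rw [hm] at ih
    rcases x with u | i <;> rcases y with v | j <;> rcases m with w | k <;>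
      simp [Sum.isLeft] at hm ih ⊢ <;> omega

end Helpers

/-- a graph `G` on at least two vertices admits a proper 3-edge-coloring iff
in the complete bipartite graph `G'` with parts `V` and `{x_r, x_g, x_b, x_d}` there are
walks — one from `u` to `v` for every edge `uv ∈ E` (the edges being oriented by a fixed
orientation `o`) and one from `x_d` to `u` for every `u ∈ V` — that together respect unit
capacities, each walk being a concatenation of at most 2 unique-shortest-path segments. -/
theorem stmt8 {V : Type*} [Fintype V] (hV : 2 ≤ Fintype.card V)
    (G : SimpleGraph V) [Fintype G.edgeSet]
    (o : G.edgeSet → V × V)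
    (ho : ∀ e : G.edgeSet, (e : Sym2 V) = s((o e).1, (o e).2)) :
    (∃ c : G.edgeSet → Fin 3, ∀ e₁ e₂ : G.edgeSet, e₁ ≠ e₂ →
      (∃ v, v ∈ (e₁ : Sym2 V) ∧ v ∈ (e₂ : Sym2 V)) → c e₁ ≠ c e₂) ↔
    (∃ (F : ∀ e : G.edgeSet, (bipG V).Walk (Sum.inl (o e).1) (Sum.inl (o e).2))
       (Dw : ∀ u : V, (bipG V).Walk (Sum.inr 3) (Sum.inl u)),
      (∀ a : Sym2 (V ⊕ Fin 4),
        (∑ e : G.edgeSet, cnt a (F e).edges) + (∑ u : V, cnt a (Dw u).edges) ≤ 1) ∧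
      (∀ e : G.edgeSet, ∃ j ≤ 2, ConcatUSP (bipG V) j (F e)) ∧
      (∀ u : V, ∃ j ≤ 2, ConcatUSP (bipG V) j (Dw u))) := by
  have hne : ∀ e : G.edgeSet, (o e).1 ≠ (o e).2 := by
    intro e
    have h1 : (e : Sym2 V) ∈ G.edgeSet := e.2
    rw [ho e] at h1
    exact (G.mem_edgeSet.mp h1).ne
  constructor
  · rintro ⟨c, hc⟩
    refine ⟨fun e => .cons (bip_adj_lr (o e).1 ((c e).castSucc))
        (.cons (bip_adj_rl ((c e).castSucc) (o e).2) .nil),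
      fun u => .cons (bip_adj_rl 3 u) .nil, ?_, ?_, ?_⟩
    · intro a
      simp only [SimpleGraph.Walk.edges_cons, SimpleGraph.Walk.edges_nil]
      apply sum_add_sum_le_one
      · intro e
        apply cnt_pair_le_one
        intro hq
        rw [Sym2.eq_iff] at hq
        rcases hq with ⟨h₁, _⟩ | ⟨h₁, _⟩
        · exact absurd h₁ (by simp)
        · exact hne e (inl_injective h₁)
      · intro u; exact cnt_singleton_le_one _ _
      · intro e₁ e₂ h1 h2
        have m1 := cnt_pos_mem h1
        have m2 := cnt_pos_mem h2
        simp only [List.mem_cons, List.mem_singleton, List.not_mem_nil, or_false] at m1 m2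
        -- extract : a = s(inl u, inr (c e).castSucc) with u an endpoint of e
        have ex1 : ∃ u, (u = (o e₁).1 ∨ u = (o e₁).2) ∧ a = s(inl u, inr ((c e₁).castSucc)) := by
          rcases m1 with m1 | m1
          · exact ⟨(o e₁).1, Or.inl rfl, m1⟩
          · exact ⟨(o e₁).2, Or.inr rfl, m1.trans (Sym2.eq_swap)⟩
        have ex2 : ∃ u, (u = (o e₂).1 ∨ u = (o e₂).2) ∧ a = s(inl u, inr ((c e₂).castSucc)) := by
          rcases m2 with m2 | m2
          · exact ⟨(o e₂).1, Or.inl rfl, m2⟩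
          · exact ⟨(o e₂).2, Or.inr rfl, m2.trans (Sym2.eq_swap)⟩
        obtain ⟨u₁, hu₁, ha₁⟩ := ex1
        obtain ⟨u₂, hu₂, ha₂⟩ := ex2
        rw [ha₁] at ha₂
        rw [Sym2.eq_iff] at ha₂
        have huu : u₁ = u₂ ∧ (c e₁).castSucc = (c e₂).castSucc := by
          rcases ha₂ with ⟨h₁, h₂⟩ | ⟨h₁, h₂⟩
          · exact ⟨inl_injective h₁, inr_injective h₂⟩
          · exact absurd h₁ (by simp)
        by_contra hne12
        apply hc e₁ e₂ hne12 ⟨u₁, ?_, ?_⟩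
        · have := huu.2
          exact Fin.castSucc_injective 3 this
        · rw [ho e₁, Sym2.mem_iff]
          rcases hu₁ with h | h
          · exact Or.inl h
          · exact Or.inr h
        · rw [ho e₂, Sym2.mem_iff]
          rw [huu.1]
          rcases hu₂ with h | h
          · exact Or.inl h
          · exact Or.inr h
      · intro u₁ u₂ h1 h2
        have m1 := cnt_pos_mem h1
        have m2 := cnt_pos_mem h2
        simp only [List.mem_singleton] at m1 m2
        rw [m1, Sym2.eq_iff] at m2
        rcases m2 with ⟨h₁, h₂⟩ | ⟨h₁, h₂⟩
        · exact inl_injective h₂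
        · exact absurd h₁ (by simp)
      · intro e u h1 h2
        have m1 := cnt_pos_mem h1
        have m2 := cnt_pos_mem h2
        simp only [List.mem_cons, List.mem_singleton, List.not_mem_nil, or_false] at m1 m2
        rw [m2] at m1
        rcases m1 with m1 | m1 <;> rw [Sym2.eq_iff] at m1 <;>
          rcases m1 with ⟨h₁, h₂⟩ | ⟨h₁, h₂⟩
        · exact absurd h₁ (by simp)
        · have : (c e).castSucc = (3 : Fin 4) := inr_injective h₁.symm
          have hv := congrArg Fin.val this
          simp [Fin.coe_castSucc] at hv
          omega
        · have : (c e).castSucc = (3 : Fin 4) := inr_injective h₁.symm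
          have hv := congrArg Fin.val this
          simp [Fin.coe_castSucc] at hv
          omega
        · exact absurd h₂ (by simp)
    · intro e
      exact ⟨2, le_refl 2, usp_two _ _⟩
    · intro u
      exact ⟨1, by omega, usp_edge _⟩
  · rintro ⟨F, Dw, hcap, hF, hD⟩
    have hDw : ∀ u : V, (Dw u).edges = [s(Sum.inr 3, Sum.inl u)] := by
      intro u
      obtain ⟨j, hj, h⟩ := hD u
      have hlen : (Dw u).length ≤ 2 := le_trans (concat_len hV h) hj
      have hpar := walk_parity2 (Dw u)
      simp [Sum.isLeft] at hpar
      have h1 : (Dw u).length = 1 := by omega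
      obtain ⟨h', he⟩ := walk_len1 _ h1
      rw [he]
      simp
    have hFw : ∀ e : G.edgeSet, ∃ i : Fin 4,
        (F e).edges = [s(Sum.inl (o e).1, Sum.inr i), s(Sum.inr i, Sum.inl (o e).2)] := by
      intro e
      obtain ⟨j, hj, h⟩ := hF e
      have hlen : (F e).length ≤ 2 := le_trans (concat_len hV h) hj
      have hpar := walk_parity2 (F e)
      simp [Sum.isLeft] at hpar
      have hlen0 : (F e).length ≠ 0 := by
        intro h0
        exact hne e (inl_injective (SimpleGraph.Walk.eq_of_length_eq_zero h0))
      have h2 : (F e).length = 2 := by omega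
      obtain ⟨m, h1, h2', hw⟩ := walk_len2 _ h2
      rcases m with w | i
      · exact absurd h1 (bip_not_adj_ll _ _)
      · exact ⟨i, by rw [hw]; simp⟩
    choose ic hic using hFw
    have h3 : ∀ e, ic e ≠ 3 := by
      intro e h3
      have hc := hcap s(Sum.inl (o e).1, Sum.inr 3)
      have m1 : (s(Sum.inl (o e).1, Sum.inr (3 : Fin 4))) ∈ (F e).edges := by
        rw [hic e, h3]
        exact List.mem_cons_self
      have m2 : (s(Sum.inl (o e).1, Sum.inr (3 : Fin 4))) ∈ (Dw (o e).1).edges := by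
        rw [hDw]
        exact List.mem_singleton.mpr Sym2.eq_swap
      have t1 : 1 ≤ ∑ e' : G.edgeSet,
          cnt (s(Sum.inl (o e).1, Sum.inr (3 : Fin 4))) (F e').edges :=
        le_trans (one_le_cnt m1)
          (Finset.single_le_sum
            (f := fun e' => cnt (s(Sum.inl (o e).1, Sum.inr (3 : Fin 4))) (F e').edges)
            (fun _ _ => Nat.zero_le _) (Finset.mem_univ e))
      have t2 : 1 ≤ ∑ u : V,
          cnt (s(Sum.inl (o e).1, Sum.inr (3 : Fin 4))) (Dw u).edges :=
        le_trans (one_le_cnt m2)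
          (Finset.single_le_sum
            (f := fun u => cnt (s(Sum.inl (o e).1, Sum.inr (3 : Fin 4))) (Dw u).edges)
            (fun _ _ => Nat.zero_le _) (Finset.mem_univ (o e).1))
      omega
    refine ⟨fun e => ⟨(ic e).val, ?_⟩, ?_⟩
    · have hlt := (ic e).2
      have hv3 : (ic e).val ≠ 3 := fun hv => h3 e (Fin.ext hv)
      omega
    · rintro e₁ e₂ hne12 ⟨v, hv1, hv2⟩ hcc
      classical
      have hicc : ic e₁ = ic e₂ := by simpa [Fin.ext_iff] using hcc
      have hv1' : v = (o e₁).1 ∨ v = (o e₁).2 := by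
        rw [ho e₁, Sym2.mem_iff] at hv1; exact hv1
      have hv2' : v = (o e₂).1 ∨ v = (o e₂).2 := by
        rw [ho e₂, Sym2.mem_iff] at hv2; exact hv2
      have m1 : s(Sum.inl v, Sum.inr (ic e₁)) ∈ (F e₁).edges := by
        rw [hic e₁]
        simp only [List.mem_cons, List.not_mem_nil, or_false]
        rcases hv1' with h | h
        · exact Or.inl (by rw [h])
        · exact Or.inr (by rw [h]; exact Sym2.eq_swap)
      have m2 : s(Sum.inl v, Sum.inr (ic e₁)) ∈ (F e₂).edges := by
        rw [hic e₂, ← hicc]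
        simp only [List.mem_cons, List.not_mem_nil, or_false]
        rcases hv2' with h | h
        · exact Or.inl (by rw [h])
        · exact Or.inr (by rw [h]; exact Sym2.eq_swap)
      have hsub : cnt (s(Sum.inl v, Sum.inr (ic e₁))) (F e₁).edges
          + cnt (s(Sum.inl v, Sum.inr (ic e₁))) (F e₂).edges
          ≤ ∑ e : G.edgeSet, cnt (s(Sum.inl v, Sum.inr (ic e₁))) (F e).edges := by
        have h1 := Finset.sum_le_sum_of_subset
          (f := fun e => cnt (s(Sum.inl v, Sum.inr (ic e₁))) (F e).edges)
          (Finset.subset_univ ({e₁, e₂} : Finset G.edgeSet))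
        rwa [Finset.sum_pair hne12] at h1
      have hc := hcap s(Sum.inl v, Sum.inr (ic e₁))
      have c1 := one_le_cnt m1
      have c2 := one_le_cnt m2
      omega
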